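/- Let Σ be a real symmetric positive definite p×p matrix, let m ∈ ℝ^p, and let z ∈ ℝ satisfy 2|z|·λmax(Σ) < 1, where λmax(Σ) is the largest eigenvalue of Σ. Then det(I_p − 2zΣ)^{−1/2} · exp( (1/2) Tr[ ((I_p − 2zΣ)^{−1} − I_p) Σ^{−1} m mᵀ ] ) = exp( (1/2) Σ_{k=1}^∞ (2^k z^k / k) · Tr(Σ^k + k Σ^{k−1} m mᵀ) ), and the series on the right-hand side converges absolutely. -/

import Mathlib

open Matrix

private lemma trace_mul_vecMulVec' {p : ℕ} (A : Matrix (Fin p) (Fin p) ℝ) (u v : Fin p → ℝ) :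
    (A * Matrix.vecMulVec u v).trace = v ⬝ᵥ (A *ᵥ u) := by
  simp only [Matrix.trace, Matrix.diag, Matrix.mul_apply, Matrix.vecMulVec_apply,
    dotProduct, Matrix.mulVec, Finset.mul_sum]
  refine Finset.sum_congr rfl fun i _ => Finset.sum_congr rfl fun j _ => by ring

/-- For a real symmetric positive definite `p × p` matrix `Σ`,
`m ∈ ℝ^p`, and `z ∈ ℝ` with `2|z|·λmax(Σ) < 1`,
`det(I − 2zΣ)^{−1/2} · exp((1/2) Tr[((I − 2zΣ)⁻¹ − I) Σ⁻¹ m mᵀ])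
  = exp((1/2) ∑_{k≥1} (2^k z^k / k) Tr(Σ^k + k Σ^{k−1} m mᵀ))`,
and the series converges absolutely (for real series, summability is absolute
convergence).  The series over `k ≥ 1` is indexed by `k = k' + 1`, `k' : ℕ`. -/
theorem stmt_3 (p : ℕ) (S : Matrix (Fin p) (Fin p) ℝ) (hS : S.PosDef)
    (m : Fin p → ℝ) (z : ℝ)
    (hz : 2 * |z| * (⨆ i, hS.1.eigenvalues i) < 1) :
    Summable (fun k : ℕ =>
      2 ^ (k + 1) * z ^ (k + 1) / (k + 1) *
        (S ^ (k + 1) + ((k : ℝ) + 1) • (S ^ k * Matrix.vecMulVec m m)).trace) ∧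
    (1 - (2 * z) • S).det ^ (-(1 / 2) : ℝ) *
        Real.exp ((1 / 2) *
          (((1 - (2 * z) • S)⁻¹ - 1) * S⁻¹ * Matrix.vecMulVec m m).trace) =
      Real.exp ((1 / 2) * ∑' k : ℕ,
        2 ^ (k + 1) * z ^ (k + 1) / (k + 1) *
          (S ^ (k + 1) + ((k : ℝ) + 1) • (S ^ k * Matrix.vecMulVec m m)).trace) := by
  classical
  have hlampos : ∀ i, 0 < hS.1.eigenvalues i := hS.eigenvalues_pos
  set lam : Fin p → ℝ := hS.1.eigenvalues with hlamdef
  set x : ℝ := 2 * z with hxdef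
  have hxl : ∀ i, |x * lam i| < 1 := by
    intro i
    have h1 : lam i ≤ ⨆ j, lam j :=
      le_ciSup (Set.Finite.bddAbove (Set.finite_range lam)) i
    have h2 : 0 ≤ 2 * |z| := by positivity
    have : 2 * |z| * lam i < 1 := lt_of_le_of_lt (by nlinarith [hlampos i]) hz
    calc |x * lam i| = 2 * |z| * lam i := by
          rw [abs_mul, abs_of_pos (hlampos i), hxdef, abs_mul, abs_two]
      _ < 1 := this
  have hposd : ∀ i, 0 < 1 - x * lam i := by
    intro i
    have := (abs_lt.mp (hxl i)).2
    linarith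
  set U : Matrix (Fin p) (Fin p) ℝ := (hS.1.eigenvectorUnitary : Matrix (Fin p) (Fin p) ℝ) with hUdef
  have hUU : U * star U = 1 := Matrix.mem_unitaryGroup_iff.mp hS.1.eigenvectorUnitary.2
  have hUU' : star U * U = 1 := Matrix.mem_unitaryGroup_iff'.mp hS.1.eigenvectorUnitary.2
  have hspec : S = U * Matrix.diagonal lam * star U := by
    have := hS.1.spectral_theorem
    simpa using this
  -- conjugation lemmas
  have hconj_mul : ∀ A B : Matrix (Fin p) (Fin p) ℝ,
      (U * A * star U) * (U * B * star U) = U * (A * B) * star U := by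
    intro A B
    have h : star U * (U * B * star U) = B * star U := by
      rw [← Matrix.mul_assoc, ← Matrix.mul_assoc, hUU', Matrix.one_mul]
    rw [Matrix.mul_assoc (U * A), h, ← Matrix.mul_assoc, Matrix.mul_assoc U A B]
  have hconj_one : (1 : Matrix (Fin p) (Fin p) ℝ) = U * 1 * star U := by
    rw [Matrix.mul_one, hUU]
  have hconj_pow : ∀ (d : Fin p → ℝ) (n : ℕ),
      (U * Matrix.diagonal d * star U) ^ n = U * Matrix.diagonal (fun i => d i ^ n) * star U := by
    intro d n
    induction n with
    | zero => simpa using hconj_one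
    | succ n ih =>
        rw [pow_succ, ih, hconj_mul, Matrix.diagonal_mul_diagonal]
        congr 2 with i
  have htrace : ∀ d : Fin p → ℝ, (U * Matrix.diagonal d * star U).trace = ∑ i, d i := by
    intro d
    rw [Matrix.trace_mul_cycle, hUU', Matrix.one_mul, Matrix.trace_diagonal]
  set w : Fin p → ℝ := star U *ᵥ m with hwdef
  have hmvU : m ᵥ* U = w := by
    funext i
    simp [hwdef, Matrix.mulVec, Matrix.vecMul, dotProduct, Matrix.star_apply, mul_comm]
  have htracev : ∀ d : Fin p → ℝ,
      (U * Matrix.diagonal d * star U * Matrix.vecMulVec m m).trace = ∑ i, d i * w i ^ 2 := by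
    intro d
    rw [trace_mul_vecMulVec', ← Matrix.mulVec_mulVec, ← Matrix.mulVec_mulVec,
      Matrix.dotProduct_mulVec, hmvU]
    simp only [dotProduct, Matrix.mulVec_diagonal, ← hwdef]
    refine Finset.sum_congr rfl fun i _ => by ring
  have hdet : ∀ d : Fin p → ℝ, (U * Matrix.diagonal d * star U).det = ∏ i, d i := by
    intro d
    rw [Matrix.det_mul, Matrix.det_mul, mul_right_comm, ← Matrix.det_mul, hUU,
      Matrix.det_one, one_mul, Matrix.det_diagonal]
  have hinv : ∀ d : Fin p → ℝ, (∀ i, d i ≠ 0) →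
      (U * Matrix.diagonal d * star U)⁻¹ = U * Matrix.diagonal (fun i => (d i)⁻¹) * star U := by
    intro d hd
    apply Matrix.inv_eq_right_inv
    rw [hconj_mul, Matrix.diagonal_mul_diagonal]
    have h : (fun i => d i * (d i)⁻¹) = fun _ => (1 : ℝ) :=
      funext fun i => mul_inv_cancel₀ (hd i)
    rw [h, Matrix.diagonal_one, Matrix.mul_one, hUU]
  -- key matrix identities
  have hone : (1 : Matrix (Fin p) (Fin p) ℝ) - x • S
      = U * Matrix.diagonal (fun i => 1 - x * lam i) * star U := by
    have h1 : Matrix.diagonal (fun i => 1 - x * lam i)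
        = (1 : Matrix (Fin p) (Fin p) ℝ) - x • Matrix.diagonal lam := by
      rw [← Matrix.diagonal_one, ← Matrix.diagonal_smul, ← Matrix.diagonal_sub]
      rfl
    rw [h1, Matrix.mul_sub, Matrix.sub_mul, ← hconj_one, hspec]
    congr 1
    rw [mul_smul_comm, smul_mul_assoc]
  -- traces of powers
  have hSpow : ∀ n : ℕ, (S ^ n).trace = ∑ i, lam i ^ n := by
    intro n
    rw [hspec, hconj_pow, htrace]
  have hSpowv : ∀ n : ℕ, (S ^ n * Matrix.vecMulVec m m).trace = ∑ i, lam i ^ n * w i ^ 2 := by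
    intro n
    rw [hspec, hconj_pow, htracev]
  -- the series
  have hf : ∀ i, HasSum
      (fun k : ℕ => x ^ (k + 1) / ((k : ℝ) + 1) *
        (lam i ^ (k + 1) + ((k : ℝ) + 1) * (lam i ^ k * w i ^ 2)))
      (-Real.log (1 - x * lam i) + (1 - x * lam i)⁻¹ * (x * w i ^ 2)) := by
    intro i
    have h1 := Real.hasSum_pow_div_log_of_abs_lt_one (hxl i)
    have h2 := (hasSum_geometric_of_abs_lt_one (hxl i)).mul_right (x * w i ^ 2)
    have h3 := h1.add h2
    have he : (fun k : ℕ => x ^ (k + 1) / ((k : ℝ) + 1) *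
        (lam i ^ (k + 1) + ((k : ℝ) + 1) * (lam i ^ k * w i ^ 2)))
        = fun k : ℕ => (x * lam i) ^ (k + 1) / ((k : ℝ) + 1)
            + (x * lam i) ^ k * (x * w i ^ 2) := by
      funext k
      have hk : ((k : ℝ) + 1) ≠ 0 := by positivity
      rw [mul_pow, mul_pow]
      field_simp
      ring
    rw [he]
    exact h3
  have hsum : HasSum
      (fun k : ℕ => ∑ i, x ^ (k + 1) / ((k : ℝ) + 1) *
        (lam i ^ (k + 1) + ((k : ℝ) + 1) * (lam i ^ k * w i ^ 2)))
      (∑ i, (-Real.log (1 - x * lam i) + (1 - x * lam i)⁻¹ * (x * w i ^ 2))) :=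
    hasSum_sum fun i _ => hf i
  have hterm_eq : (fun k : ℕ =>
      2 ^ (k + 1) * z ^ (k + 1) / (k + 1) *
        (S ^ (k + 1) + ((k : ℝ) + 1) • (S ^ k * Matrix.vecMulVec m m)).trace)
      = fun k : ℕ => ∑ i, x ^ (k + 1) / ((k : ℝ) + 1) *
        (lam i ^ (k + 1) + ((k : ℝ) + 1) * (lam i ^ k * w i ^ 2)) := by
    funext k
    rw [Matrix.trace_add, Matrix.trace_smul, hSpow, hSpowv, smul_eq_mul,
      Finset.mul_sum, mul_add, Finset.mul_sum, Finset.mul_sum, ← Finset.sum_add_distrib]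
    refine Finset.sum_congr rfl fun i _ => ?_
    rw [hxdef]
    ring
  have hsum' : HasSum
      (fun k : ℕ => 2 ^ (k + 1) * z ^ (k + 1) / (k + 1) *
        (S ^ (k + 1) + ((k : ℝ) + 1) • (S ^ k * Matrix.vecMulVec m m)).trace)
      (∑ i, (-Real.log (1 - x * lam i) + (1 - x * lam i)⁻¹ * (x * w i ^ 2))) := by
    rw [hterm_eq]; exact hsum
  refine ⟨hsum'.summable, ?_⟩
  rw [hsum'.tsum_eq]
  -- the determinant part
  have hdet1 : ((1 : Matrix (Fin p) (Fin p) ℝ) - x • S).det = ∏ i, (1 - x * lam i) := by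
    rw [hone, hdet]
  have hdetpos : (0 : ℝ) < ∏ i, (1 - x * lam i) :=
    Finset.prod_pos fun i _ => hposd i
  -- the trace part
  have htr2 : (((1 : Matrix (Fin p) (Fin p) ℝ) - x • S)⁻¹ - 1) * S⁻¹ * Matrix.vecMulVec m m
      = U * Matrix.diagonal (fun i => ((1 - x * lam i)⁻¹ - 1) * (lam i)⁻¹) * star U
        * Matrix.vecMulVec m m := by
    have hi1 : ((1 : Matrix (Fin p) (Fin p) ℝ) - x • S)⁻¹
        = U * Matrix.diagonal (fun i => (1 - x * lam i)⁻¹) * star U := by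
      rw [hone]; exact hinv _ fun i => (hposd i).ne'
    have hi2 : S⁻¹ = U * Matrix.diagonal (fun i => (lam i)⁻¹) * star U := by
      conv_lhs => rw [hspec]
      exact hinv _ fun i => (hlampos i).ne'
    have hsub : U * Matrix.diagonal (fun i => (1 - x * lam i)⁻¹) * star U - 1
        = U * Matrix.diagonal (fun i => (1 - x * lam i)⁻¹ - 1) * star U := by
      rw [hconj_one, ← Matrix.sub_mul, ← Matrix.mul_sub]
      congr 2
      rw [← Matrix.diagonal_one, ← Matrix.diagonal_sub]
    rw [hi1, hi2, hsub, hconj_mul, Matrix.diagonal_mul_diagonal]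
  rw [hdet1, Real.rpow_def_of_pos hdetpos, htr2, htracev, ← Real.exp_add]
  congr 1
  have e1 : ∑ i, ((1 - x * lam i)⁻¹ - 1) * (lam i)⁻¹ * w i ^ 2
      = ∑ i, (1 - x * lam i)⁻¹ * (x * w i ^ 2) := by
    refine Finset.sum_congr rfl fun i _ => ?_
    have h1 : lam i ≠ 0 := (hlampos i).ne'
    have h2 : 1 - x * lam i ≠ 0 := (hposd i).ne'
    field_simp
    ring
  rw [e1, Real.log_prod fun i _ => (hposd i).ne', Finset.sum_add_distrib,
    Finset.sum_neg_distrib]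
  ring
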